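/- Let f₁(s) = ∫_{s₀}^s c₁/√(c₁² − ξ^{4/3}) dξ for a constant c₁ with c₁² > s^{4/3} on the domain. Then f₁ satisfies the differential equation −3f₁''/(f₁'(1 − f₁'²)) = 2/s. -/

import Mathlib

theorem stmt_1 (c₁ s₀ a b : ℝ) (hc : c₁ ≠ 0) (ha : 0 < a) (hab : a < b)
    (hs₀ : s₀ ∈ Set.Ioo a b)
    (hdom : ∀ s ∈ Set.Ioo a b, s ^ ((4 : ℝ) / 3) < c₁ ^ 2)
    (f₁ : ℝ → ℝ)
    (hf : ∀ s, f₁ s = ∫ ξ in s₀..s, c₁ / Real.sqrt (c₁ ^ 2 - ξ ^ ((4 : ℝ) / 3))) :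
    ∀ s ∈ Set.Ioo a b,
      (-3 * deriv (deriv f₁) s) / (deriv f₁ s * (1 - (deriv f₁ s) ^ 2)) = 2 / s := by
  set g : ℝ → ℝ := fun t => c₁ / Real.sqrt (c₁ ^ 2 - t ^ ((4 : ℝ) / 3)) with hg
  have hfe : f₁ = fun s => ∫ ξ in s₀..s, g ξ := funext hf
  have hpos : ∀ t ∈ Set.Ioo a b, 0 < c₁ ^ 2 - t ^ ((4 : ℝ) / 3) := by
    intro t ht; linarith [hdom t ht]
  have hcont : ContinuousOn g (Set.Ioo a b) := by
    intro t ht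
    have h1 : ContinuousAt (fun x : ℝ => x ^ ((4 : ℝ) / 3)) t :=
      Real.continuousAt_rpow_const t _ (Or.inr (by norm_num))
    have h2 : ContinuousAt (fun x : ℝ => Real.sqrt (c₁ ^ 2 - x ^ ((4 : ℝ) / 3))) t :=
      Real.continuous_sqrt.continuousAt.comp (continuousAt_const.sub h1)
    exact (ContinuousAt.div continuousAt_const h2
      (ne_of_gt (Real.sqrt_pos.mpr (hpos t ht)))).continuousWithinAt
  have hder : ∀ t ∈ Set.Ioo a b, HasDerivAt f₁ (g t) t := by
    intro t ht
    rw [hfe]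
    apply intervalIntegral.integral_hasDerivAt_right
    · exact (hcont.mono (Set.ordConnected_Ioo.uIcc_subset hs₀ ht)).intervalIntegrable
    · exact hcont.stronglyMeasurableAtFilter isOpen_Ioo t ht
    · exact hcont.continuousAt (isOpen_Ioo.mem_nhds ht)
  intro s hs
  have hspos : 0 < s := lt_trans ha hs.1
  have hu : 0 < c₁ ^ 2 - s ^ ((4 : ℝ) / 3) := hpos s hs
  have hv : 0 < Real.sqrt (c₁ ^ 2 - s ^ ((4 : ℝ) / 3)) := Real.sqrt_pos.mpr hu
  -- deriv f₁ = g near s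
  have hev : deriv f₁ =ᶠ[nhds s] g := by
    filter_upwards [isOpen_Ioo.mem_nhds hs] with t ht using (hder t ht).deriv
  have hd1 : deriv f₁ s = g s := (hder s hs).deriv
  -- derivative of g at s
  have h1 : HasDerivAt (fun t : ℝ => t ^ ((4 : ℝ) / 3))
      ((4 / 3) * s ^ ((4 : ℝ) / 3 - 1)) s :=
    Real.hasDerivAt_rpow_const (Or.inl (ne_of_gt hspos))
  have h2 : HasDerivAt (fun t : ℝ => c₁ ^ 2 - t ^ ((4 : ℝ) / 3))
      (-((4 / 3) * s ^ ((4 : ℝ) / 3 - 1))) s := h1.const_sub _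
  have h3 : HasDerivAt (fun t : ℝ => Real.sqrt (c₁ ^ 2 - t ^ ((4 : ℝ) / 3)))
      (-((4 / 3) * s ^ ((4 : ℝ) / 3 - 1)) /
        (2 * Real.sqrt (c₁ ^ 2 - s ^ ((4 : ℝ) / 3)))) s :=
    h2.sqrt (ne_of_gt hu)
  have h4 : HasDerivAt g
      ((0 * Real.sqrt (c₁ ^ 2 - s ^ ((4 : ℝ) / 3)) -
        c₁ * (-((4 / 3) * s ^ ((4 : ℝ) / 3 - 1)) /
          (2 * Real.sqrt (c₁ ^ 2 - s ^ ((4 : ℝ) / 3))))) /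
        Real.sqrt (c₁ ^ 2 - s ^ ((4 : ℝ) / 3)) ^ 2) s :=
    (hasDerivAt_const s c₁).div h3 (ne_of_gt hv)
  have hd2 : deriv (deriv f₁) s =
      (0 * Real.sqrt (c₁ ^ 2 - s ^ ((4 : ℝ) / 3)) -
        c₁ * (-((4 / 3) * s ^ ((4 : ℝ) / 3 - 1)) /
          (2 * Real.sqrt (c₁ ^ 2 - s ^ ((4 : ℝ) / 3))))) /
        Real.sqrt (c₁ ^ 2 - s ^ ((4 : ℝ) / 3)) ^ 2 := by
    rw [hev.deriv_eq]; exact h4.deriv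
  rw [hd1, hd2]
  have hsq : Real.sqrt (c₁ ^ 2 - s ^ ((4 : ℝ) / 3)) ^ 2 = c₁ ^ 2 - s ^ ((4 : ℝ) / 3) :=
    Real.sq_sqrt hu.le
  have hrw : s ^ ((4 : ℝ) / 3) = s ^ ((4 : ℝ) / 3 - 1) * s := by
    rw [← Real.rpow_add_one (ne_of_gt hspos)]
    norm_num
  have hgs : g s = c₁ / Real.sqrt (c₁ ^ 2 - s ^ ((4 : ℝ) / 3)) := rfl
  rw [hgs]
  set v := Real.sqrt (c₁ ^ 2 - s ^ ((4 : ℝ) / 3)) with hvdef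
  set q := s ^ ((4 : ℝ) / 3 - 1) with hqdef
  have hv2 : v ^ 2 = c₁ ^ 2 - q * s := by rw [hsq, hrw]
  have hqpos : 0 < q := Real.rpow_pos_of_pos hspos _
  have hne : c₁ / v * (1 - (c₁ / v) ^ 2) ≠ 0 := by
    have h1 : c₁ / v ≠ 0 := div_ne_zero hc hv.ne'
    have h2 : (1 : ℝ) - (c₁ / v) ^ 2 ≠ 0 := by
      rw [div_pow, hv2]
      have h3 : (1 : ℝ) < c₁ ^ 2 / (c₁ ^ 2 - q * s) := by
        rw [lt_div_iff₀ (by nlinarith [mul_pos hqpos hspos])]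
        nlinarith [mul_pos hqpos hspos]
      linarith
    exact mul_ne_zero h1 h2
  rw [div_eq_div_iff hne hspos.ne']
  field_simp
  linear_combination (-4 * c₁) * hv2
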